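/- arXiv:0802.0196 — 3 statements merged into one kernel-verified Lean document; each statement's English description precedes it below -/
import Mathlib

section
/- Let p ∈ ℍ, let φ(z) = (z-p)/(z-conj(p)) be the Cayley map ℍ → 𝔻, and let g ∈ SL₂(ℝ) act on ℍ. Set g^φ = φ∘g∘φ⁻¹ ∈ SU(1,1). Then the preimage under φ of the isometric circle I(g^φ) ⊂ 𝔻 equals the perpendicular bisector {z ∈ ℍ : d(z,p) = d(gz,p)} of the geodesic between p and g⁻¹(p), where d is the hyperbolic distance on ℍ. -/
open Complex UpperHalfPlane Matrix MatrixGroups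

private lemma tanh_inj' {x y : ℝ} (h : Real.tanh x = Real.tanh y) : x = y := by
  rw [Real.tanh_eq_sinh_div_cosh, Real.tanh_eq_sinh_div_cosh,
    div_eq_div_iff (Real.cosh_pos x).ne' (Real.cosh_pos y).ne'] at h
  have h0 : Real.sinh (x - y) = 0 := by
    rw [Real.sinh_sub]; linarith
  have := Real.sinh_injective (h0.trans Real.sinh_zero.symm)
  linarith

/-- Let `φ(z) = (z-p)/(z - conj p)` be the Cayley map `ℍ → 𝔻`, let
`g ∈ SL₂(ℝ)` act on `ℍ`, and let `h = [[A,B],[C,D]] ∈ SU(1,1)` (with `C ≠ 0`) be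
`g^φ = φ ∘ g ∘ φ⁻¹`.  Then the preimage under `φ` of the isometric circle
`I(g^φ) = {w : |Cw + D| = 1}` is the perpendicular bisector
`{z ∈ ℍ : d(z,p) = d(gz,p)}`, where `d` is the hyperbolic distance on `ℍ`. -/
theorem preimage_isometric_circle_eq_perp_bisector
    (p : UpperHalfPlane) (g : SL(2, ℝ)) (A B C D : ℂ)
    (hsu : A = (starRingEnd ℂ) D ∧ B = (starRingEnd ℂ) C)
    (hdet : A * D - B * C = 1) (hC : C ≠ 0)
    (hconj : ∀ z : UpperHalfPlane,
      (A * (((z : ℂ) - (p : ℂ)) / ((z : ℂ) - (starRingEnd ℂ) (p : ℂ))) + B) /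
        (C * (((z : ℂ) - (p : ℂ)) / ((z : ℂ) - (starRingEnd ℂ) (p : ℂ))) + D) =
      (((g • z : UpperHalfPlane) : ℂ) - (p : ℂ)) /
        (((g • z : UpperHalfPlane) : ℂ) - (starRingEnd ℂ) (p : ℂ))) :
    {z : UpperHalfPlane |
        ‖C * (((z : ℂ) - (p : ℂ)) / ((z : ℂ) - (starRingEnd ℂ) (p : ℂ))) + D‖ = 1} =
      {z : UpperHalfPlane | dist z p = dist (g • z) p} := by
  obtain ⟨hA, hB⟩ := hsu
  -- |D|^2 - |C|^2 = 1
  have hdc : Complex.normSq D - Complex.normSq C = 1 := by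
    rw [hA, hB] at hdet
    have h2 := congrArg Complex.re hdet
    simp only [Complex.sub_re, Complex.mul_re, Complex.conj_re, Complex.conj_im,
      Complex.one_re] at h2
    simp only [Complex.normSq_apply]
    nlinarith [h2]
  ext z
  simp only [Set.mem_setOf_eq]
  set w : ℂ := ((z : ℂ) - (p : ℂ)) / ((z : ℂ) - (starRingEnd ℂ) (p : ℂ)) with hw
  -- basic facts about the Cayley image w
  have hne : (z : ℂ) - (starRingEnd ℂ) (p : ℂ) ≠ 0 := by
    intro h
    have h2 := congrArg Complex.im h
    simp only [Complex.sub_im, Complex.conj_im, Complex.zero_im, coe_im] at h2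
    nlinarith [z.im_pos, p.im_pos]
  have key4 : Complex.normSq ((z : ℂ) - (starRingEnd ℂ) (p : ℂ)) =
      Complex.normSq ((z : ℂ) - (p : ℂ)) + 4 * z.im * p.im := by
    simp only [Complex.normSq_apply, Complex.sub_re, Complex.sub_im, Complex.conj_re,
      Complex.conj_im, ← coe_im]
    ring
  have hposden : 0 < Complex.normSq ((z : ℂ) - (starRingEnd ℂ) (p : ℂ)) :=
    Complex.normSq_pos.mpr hne
  have hwlt : Complex.normSq w < 1 := by
    rw [hw, map_div₀, div_lt_one hposden, key4]
    nlinarith [z.im_pos, p.im_pos]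
  have hCD0 : C * w + D ≠ 0 := by
    intro h
    have hwD : w = -D / C := by field_simp; linear_combination h
    have h2 : Complex.normSq w = Complex.normSq D / Complex.normSq C := by
      rw [hwD, map_div₀, Complex.normSq_neg]
    rw [h2, div_lt_one (Complex.normSq_pos.mpr hC)] at hwlt
    linarith
  -- tanh of half distances
  have tanh1 : Real.tanh (dist z p / 2) = ‖w‖ := by
    rw [UpperHalfPlane.tanh_half_dist, hw, norm_div, Complex.dist_eq, Complex.dist_eq]
  have tanh2 : Real.tanh (dist (g • z) p / 2) = ‖(A * w + B) / (C * w + D)‖ := by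
    rw [UpperHalfPlane.tanh_half_dist, hconj z, norm_div, Complex.dist_eq, Complex.dist_eq]
  have hdist : (dist z p = dist (g • z) p) ↔
      ‖(A * w + B) / (C * w + D)‖ = ‖w‖ := by
    constructor
    · intro h
      rw [← tanh1, ← tanh2, h]
    · intro h
      have h2 : Real.tanh (dist z p / 2) = Real.tanh (dist (g • z) p / 2) := by
        rw [tanh1, tanh2, h]
      have := tanh_inj' h2
      linarith
  -- key SU(1,1) identity
  have keyid : Complex.normSq (A * w + B) =
      Complex.normSq (C * w + D) - (1 - Complex.normSq w) := by
    rw [hA, hB]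
    simp only [Complex.normSq_apply, Complex.add_re, Complex.add_im, Complex.mul_re,
      Complex.mul_im, Complex.conj_re, Complex.conj_im]
    simp only [Complex.normSq_apply] at hdc
    nlinarith [hdc]
  have habs_iff : ∀ x y : ℂ, ‖x‖ = ‖y‖ ↔
      Complex.normSq x = Complex.normSq y := fun x y => by
    rw [Complex.norm_def, Complex.norm_def,
      Real.sqrt_inj (Complex.normSq_nonneg x) (Complex.normSq_nonneg y)]
  rw [hdist, habs_iff, show (1 : ℝ) = ‖(1 : ℂ)‖ by simp, habs_iff, Complex.normSq_one,
    map_div₀, keyid]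
  have hpos : 0 < Complex.normSq (C * w + D) := Complex.normSq_pos.mpr hCD0
  rw [div_eq_iff hpos.ne']
  constructor
  · intro h; rw [h]; ring
  · intro h; nlinarith [hwlt]
end

section
/- Let p = x + yi with y > 0, let g = [[a,b],[c,d]] ∈ SL₂(ℝ) with g(p) ≠ p, and let f_g(t) = ct² + (d-a)t - b. Then the radius of the isometric circle of g^φ = φgφ⁻¹ ∈ SU(1,1) (where φ(z) = (z-p)/(z-conj(p))) equals 2y/|f_g(p)|. -/
open Complex

/-- Let `p = x + yi` with `y > 0`, let `g = [[a,b],[c,d]] ∈ SL₂(ℝ)` with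
`g(p) ≠ p`, and let `f_g(t) = ct² + (d-a)t - b`.  If `h = [[A,B],[C,D]] ∈ SU(1,1)` is
`g^φ = φgφ⁻¹`, where `φ(z) = (z-p)/(z - conj p)`, then the radius `1/|C|` of the
isometric circle of `g^φ` equals `2y/|f_g(p)|`. -/
theorem isometric_circle_radius (x y : ℝ) (hy : 0 < y) (a b c d : ℝ)
    (hdetg : a * d - b * c = 1) (A B C D : ℂ)
    (hsu : A = (starRingEnd ℂ) D ∧ B = (starRingEnd ℂ) C)
    (hdet : A * D - B * C = 1)
    (hgp : ((a : ℂ) * (x + y * Complex.I) + b) / ((c : ℂ) * (x + y * Complex.I) + d) ≠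
      (x : ℂ) + y * Complex.I)
    (hconj : ∀ z : ℂ, 0 < z.im →
      (A * ((z - ((x : ℂ) + y * Complex.I)) /
          (z - (starRingEnd ℂ) ((x : ℂ) + y * Complex.I))) + B) /
        (C * ((z - ((x : ℂ) + y * Complex.I)) /
          (z - (starRingEnd ℂ) ((x : ℂ) + y * Complex.I))) + D) =
      (((a : ℂ) * z + b) / ((c : ℂ) * z + d) - ((x : ℂ) + y * Complex.I)) /
        (((a : ℂ) * z + b) / ((c : ℂ) * z + d) - (starRingEnd ℂ) ((x : ℂ) + y * Complex.I))) :
    ‖C‖⁻¹ =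
      2 * y / ‖
        ((c : ℂ) * ((x : ℂ) + y * Complex.I) ^ 2 +
          ((d : ℂ) - a) * ((x : ℂ) + y * Complex.I) - b)‖ := by
  set p : ℂ := (x:ℂ) + y*Complex.I with hp
  have hq : (starRingEnd ℂ) p = (x:ℂ) - y*Complex.I := by
    simp [hp, Complex.ext_iff]
  simp only [hq] at hconj
  set q : ℂ := (x:ℂ) - y*Complex.I with hqdef
  clear_value p q
  obtain ⟨hA, hB⟩ := hsu
  have hdetg' : (a:ℂ)*(d:ℂ) - (b:ℂ)*(c:ℂ) = 1 := by exact_mod_cast hdetg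
  have him_q : q.im = -y := by simp [hqdef]
  have him_p : p.im = y := by simp [hp]
  have hnormD : Complex.normSq D = 1 + Complex.normSq C := by
    have h' : ((Complex.normSq D : ℂ)) - (Complex.normSq C : ℂ) = 1 := by
      rw [← Complex.mul_conj, ← Complex.mul_conj]
      linear_combination hdet - hA * D + C * hB
    have := congrArg Complex.re h'
    simp at this
    linarith
  -- the fundamental polynomial identity
  have key : ∀ z : ℂ, 0 < z.im →
      (A * (z - p) + B * (z - q)) * (((a:ℂ)*z + b) - q * ((c:ℂ)*z + d)) =
      (C * (z - p) + D * (z - q)) * (((a:ℂ)*z + b) - p * ((c:ℂ)*z + d)) := by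
    intro z hz
    have hcz := hconj z hz
    have h1 : z - q ≠ 0 := by
      intro h
      have : (z - q).im = 0 := by rw [h]; simp
      simp [Complex.sub_im, him_q] at this
      linarith
    have h2 : (c:ℂ)*z + d ≠ 0 := by
      rcases eq_or_ne c 0 with hc | hc
      · have hd : d ≠ 0 := by intro h; rw [hc, h] at hdetg; simp at hdetg
        simp [hc]
        exact_mod_cast hd
      · intro h
        have : ((c:ℂ)*z + d).im = 0 := by rw [h]; simp
        simp [Complex.add_im, Complex.mul_im] at this
        rcases this with h' | h'
        · exact hc h'
        · linarith
    have himgz : 0 < (((a:ℂ)*z + b) / ((c:ℂ)*z + d)).im := by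
      rw [Complex.div_im]
      have hns : 0 < Complex.normSq ((c:ℂ)*z + d) := by
        rwa [Complex.normSq_pos]
      have hnum : ((a:ℂ)*z + b).im * ((c:ℂ)*z + d).re - ((a:ℂ)*z + b).re * ((c:ℂ)*z + d).im
          = (a*d - b*c) * z.im := by
        simp [Complex.add_im, Complex.add_re, Complex.mul_im, Complex.mul_re]
        ring
      rw [div_sub_div_same, hnum, hdetg, one_mul]
      positivity
    have h3 : ((a:ℂ)*z + b) / ((c:ℂ)*z + d) - q ≠ 0 := by
      intro h
      have : (((a:ℂ)*z + b) / ((c:ℂ)*z + d) - q).im = 0 := by rw [h]; simp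
      rw [Complex.sub_im, him_q] at this
      linarith
    have hwlt : Complex.normSq (z - p) < Complex.normSq (z - q) := by
      simp only [Complex.normSq_apply, Complex.sub_re, Complex.sub_im, hp, hqdef,
        Complex.add_re, Complex.add_im, Complex.sub_re, Complex.sub_im,
        Complex.mul_re, Complex.mul_im, Complex.ofReal_re, Complex.ofReal_im,
        Complex.I_re, Complex.I_im]
      nlinarith [hz, hy]
    have h4 : C * ((z - p)/(z - q)) + D ≠ 0 := by
      intro h
      have hDC : D = -(C * ((z - p)/(z - q))) := by linear_combination h
      have hns : Complex.normSq D
          = Complex.normSq C * (Complex.normSq (z-p) / Complex.normSq (z-q)) := by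
        rw [hDC]
        simp [Complex.normSq_mul, Complex.normSq_div]
      have hq0 : 0 < Complex.normSq (z - q) := by rwa [Complex.normSq_pos]
      have hlt : Complex.normSq (z-p) / Complex.normSq (z-q) < 1 := by
        rw [div_lt_one hq0]; exact hwlt
      nlinarith [Complex.normSq_nonneg C, Complex.normSq_nonneg (z-p)]
    have cross := (div_eq_div_iff h4 h3).mp hcz
    have e1 : A * ((z-p)/(z-q)) + B = (A*(z-p) + B*(z-q))/(z-q) := by
      field_simp
    have e2 : C * ((z-p)/(z-q)) + D = (C*(z-p) + D*(z-q))/(z-q) := by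
      field_simp
    have e3 : ((a:ℂ)*z+b)/((c:ℂ)*z+d) - q
        = (((a:ℂ)*z+b) - q*((c:ℂ)*z+d))/((c:ℂ)*z+d) := by
      rw [eq_div_iff h2, sub_mul, div_mul_cancel₀ _ h2]
    have e4 : ((a:ℂ)*z+b)/((c:ℂ)*z+d) - p
        = (((a:ℂ)*z+b) - p*((c:ℂ)*z+d))/((c:ℂ)*z+d) := by
      rw [eq_div_iff h2, sub_mul, div_mul_cancel₀ _ h2]
    rw [e1, e2, e3, e4, div_mul_div_comm, div_mul_div_comm] at cross
    have h12 : (z - q) * ((c:ℂ)*z + d) ≠ 0 := mul_ne_zero h1 h2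
    have h21 : ((c:ℂ)*z + d) * (z - q) ≠ 0 := mul_ne_zero h2 h1
    have key' := (div_eq_div_iff h12 h21).mp cross
    set_option maxRecDepth 10000 in
    set_option maxHeartbeats 1000000 in
    refine mul_right_cancel₀ h21 ?_
    linear_combination key'
  -- evaluate at p, p+1, p+2
  have him_p1 : (p + 1).im = y := by simp [him_p]
  have him_p2 : (p + 2).im = y := by simp [him_p]
  have E1 := key p (by rw [him_p]; exact hy)
  have E2 := key (p + 1) (by rw [him_p1]; exact hy)
  have E3 := key (p + 2) (by rw [him_p2]; exact hy)
  clear key hconj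
  -- coefficients
  set_option maxRecDepth 10000 in
  set_option maxHeartbeats 2000000 in
  have eq1 : (A+B)*((a:ℂ) - q*c) = (C+D)*((a:ℂ) - p*c) := by
    linear_combination (E1 - 2*E2 + E3)/2
  set_option maxRecDepth 10000 in
  set_option maxHeartbeats 2000000 in
  have eq2 : (A+B)*((b:ℂ) - q*d) + (-(A*p+B*q))*((a:ℂ) - q*c)
      = (C+D)*((b:ℂ) - p*d) + (-(C*p+D*q))*((a:ℂ) - p*c) := by
    linear_combination (E2 - E1) - ((2*p+1)/2)*(E1 - 2*E2 + E3)
  set_option maxRecDepth 10000 in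
  set_option maxHeartbeats 2000000 in
  have eq3 : (-(A*p+B*q))*((b:ℂ) - q*d) = (-(C*p+D*q))*((b:ℂ) - p*d) := by
    linear_combination E1 - p^2*((E1 - 2*E2 + E3)/2)
      - p*((E2 - E1) - ((2*p+1)/2)*(E1 - 2*E2 + E3))
  clear E1 E2 E3
  have det1 : (A+B)*(-(C*p+D*q)) - (-(A*p+B*q))*(C+D) = p - q := by
    linear_combination (p - q)*hdet
  have det2 : ((a:ℂ) - p*c)*((b:ℂ) - q*d) - ((b:ℂ) - p*d)*((a:ℂ) - q*c) = p - q := by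
    linear_combination (p - q)*hdetg'
  set u : ℂ := (A+B)*((b:ℂ) - q*d) - ((b:ℂ) - p*d)*(C+D) with hu
  have rel1 : (p-q)*(C+D) = u*((a:ℂ) - q*c) := by
    rw [hu]; linear_combination (-(C+D))*det2 - ((b:ℂ) - q*d)*eq1
  have rel2 : (p-q)*(-(C*p+D*q)) = u*((b:ℂ) - q*d) := by
    rw [hu]
    linear_combination (-((b:ℂ) - q*d))*eq2 + ((a:ℂ) - q*c)*eq3 - (-(C*p+D*q))*det2
  have rel3 : (p-q)*((a:ℂ) - q*c) = u*(C+D) := by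
    rw [hu]
    linear_combination (-(C+D))*eq2 + (-(C*p+D*q))*eq1 - ((a:ℂ) - q*c)*det1
  have rel4 : (p-q)*((b:ℂ) - q*d) = u*(-(C*p+D*q)) := by
    rw [hu]
    linear_combination (-(C+D))*eq3 - ((b:ℂ) - q*d)*det1
  have hpq : p - q ≠ 0 := by
    intro h
    have : (p - q).im = 0 := by rw [h]; simp
    rw [Complex.sub_im, him_p, him_q] at this
    linarith
  have hu0 : u ≠ 0 := by
    intro h0
    rw [h0, zero_mul] at rel1 rel2
    have hR1 : C + D = 0 := by
      rcases mul_eq_zero.mp rel1 with h | h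
      · exact absurd h hpq
      · exact h
    have hS1 : -(C*p+D*q) = 0 := by
      rcases mul_eq_zero.mp rel2 with h | h
      · exact absurd h hpq
      · exact h
    rw [hR1, hS1] at det1
    simp at det1
    exact hpq det1.symm
  have hu2 : u^2 = (p-q)^2 := by
    by_contra hne
    have hfac : (p-q)^2 - u^2 ≠ 0 := by
      intro h
      apply hne
      linear_combination -h
    have h5 : ((p-q)^2 - u^2) * ((a:ℂ) - q*c) = 0 := by
      linear_combination (p-q)*rel3 + u*rel1
    have h6 : ((p-q)^2 - u^2) * ((b:ℂ) - q*d) = 0 := by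
      linear_combination (p-q)*rel4 + u*rel2
    have hR2 : (a:ℂ) - q*c = 0 := by
      rcases mul_eq_zero.mp h5 with h | h
      · exact absurd h hfac
      · exact h
    have hS2 : (b:ℂ) - q*d = 0 := by
      rcases mul_eq_zero.mp h6 with h | h
      · exact absurd h hfac
      · exact h
    rw [hR2, hS2] at det2
    simp at det2
    exact hpq det2.symm
  have hCf : (p-q)^2 * C = u * ((c:ℂ)*q^2 + ((d:ℂ)-(a:ℂ))*q - b) := by
    linear_combination (-q)*rel1 - rel2
  -- abs computations
  have habspq : ‖p - q‖ = 2*y := by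
    have hpqv : p - q = ((2*y : ℝ) : ℂ) * Complex.I := by
      rw [hp, hqdef]; push_cast; ring
    rw [hpqv, norm_mul, Complex.norm_I, Complex.norm_real, mul_one, Real.norm_eq_abs, abs_of_pos (by linarith)]
  have habsu : ‖u‖ = 2*y := by
    have h' := congrArg (‖·‖) hu2
    rw [norm_pow, norm_pow, habspq] at h'
    nlinarith [norm_nonneg u]
  have hfq_fp : ((c:ℂ)*q^2 + ((d:ℂ)-(a:ℂ))*q - b)
      = (starRingEnd ℂ) ((c:ℂ)*p^2 + ((d:ℂ)-(a:ℂ))*p - b) := by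
    rw [hp, hqdef]
    simp only [map_sub, map_add, map_mul, map_pow, Complex.conj_ofReal, Complex.conj_I]
    ring
  have habsC : ‖C‖
      = ‖(c:ℂ)*p^2 + ((d:ℂ)-(a:ℂ))*p - b‖ / (2*y) := by
    have h' := congrArg (‖·‖) hCf
    rw [norm_mul, norm_mul, norm_pow, habspq, habsu, hfq_fp, Complex.norm_conj] at h'
    have h2y : (2*y) ≠ 0 := by positivity
    rw [eq_div_iff h2y]
    have : (2*y) * (‖C‖ * (2*y)) = (2*y) * ‖(c:ℂ)*p^2 + ((d:ℂ)-(a:ℂ))*p - b‖ := by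
      nlinarith [h']
    exact mul_left_cancel₀ h2y this
  rw [habsC, inv_div]
end

section
/- Let F be a totally real number field of degree n, let B be a quaternion algebra over F split at exactly one real place v (with the other n-1 real places ramified), and let p = x + yi ∈ ℍ. Then the absolute reduced norm N : B → ℝ defined by N(g) = |f_{ι(g)}(p)|² + 2y²·Tr_{F/ℚ}(nrd(g)) is a positive definite quadratic form on B viewed as a ℚ-vector space of dimension 4n, where ι : B → M₂(ℝ) is the embedding at the split place and f_{[[a,b],[c,d]]}(t) = ct² + (d-a)t - b. -/
open Complex

/-- The reduced norm of a quaternion `γ = x + yα + zβ + wαβ` in `(h,k | F)`. -/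
def quatNrd {F : Type*} [Field F] (h k : F) (γ : QuaternionAlgebra F h 0 k) : F :=
  γ.re ^ 2 - h * γ.imI ^ 2 - k * γ.imJ ^ 2 + h * k * γ.imK ^ 2

/-- The absolute reduced norm `N(g) = |f_{ι(g)}(p)|² + 2y²·Tr_{F/ℚ}(nrd g)` with
respect to `p = x + yi`, where `f_{[[a,b],[c,d]]}(t) = ct² + (d-a)t - b`. -/
noncomputable def absRedNorm {F : Type*} [Field F] [Algebra ℚ F] (h k : F)
    (ι : QuaternionAlgebra F h 0 k →+* Matrix (Fin 2) (Fin 2) ℝ) (x y : ℝ)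
    (g : QuaternionAlgebra F h 0 k) : ℝ :=
  ‖(((ι g) 1 0 : ℂ) * ((x : ℂ) + y * Complex.I) ^ 2 +
      (((ι g) 1 1 : ℂ) - ((ι g) 0 0 : ℂ)) * ((x : ℂ) + y * Complex.I) - ((ι g) 0 1 : ℂ))‖ ^ 2 +
    2 * y ^ 2 * ((Algebra.trace ℚ F (quatNrd h k g) : ℚ) : ℝ)

noncomputable def rhsForm (a b c d x y : ℝ) : ℝ :=
  ((c*x^2+d*x - c*y^2 - a*x - b)^2 + y^2*(2*c*x+d-a)^2
       + (c*x^2+d*x+c*y^2 - a*x - b)^2 + y^2*(d+a)^2)/2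

lemma key_eq (a b c d x y : ℝ) :
    ‖((c:ℂ) * ((x:ℂ) + y*I)^2 + ((d:ℂ) - a) * ((x:ℂ)+y*I) - b)‖ ^ 2
      + 2*y^2*(a*d - b*c) = rhsForm a b c d x y := by
  rw [rhsForm, Complex.sq_norm, Complex.normSq_apply]
  simp only [pow_two, Complex.add_re, Complex.add_im, Complex.sub_re, Complex.sub_im,
    Complex.mul_re, Complex.mul_im, Complex.ofReal_re, Complex.ofReal_im,
    Complex.I_re, Complex.I_im]
  ring

lemma rhsForm_nonneg (a b c d x y : ℝ) : 0 ≤ rhsForm a b c d x y := by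
  rw [rhsForm]; positivity

lemma key_pos (a b c d x y : ℝ) (hy : y ≠ 0)
    (hne : ¬ (a = 0 ∧ b = 0 ∧ c = 0 ∧ d = 0)) : 0 < rhsForm a b c d x y := by
  have hy2 : 0 < y^2 := by positivity
  rcases lt_or_eq_of_le (rhsForm_nonneg a b c d x y) with hlt | heq
  · exact hlt
  exfalso
  rw [rhsForm] at heq
  have h0 := heq.symm
  have e1 : (c*x^2+d*x - c*y^2 - a*x - b)^2 = 0 := by linarith [sq_nonneg (c*x^2+d*x - c*y^2 - a*x - b), sq_nonneg (c*x^2+d*x+c*y^2 - a*x - b), mul_nonneg hy2.le (sq_nonneg (2*c*x+d-a)), mul_nonneg hy2.le (sq_nonneg (d+a))]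
  have e2 : y^2*(2*c*x+d-a)^2 = 0 := by linarith [sq_nonneg (c*x^2+d*x - c*y^2 - a*x - b), sq_nonneg (c*x^2+d*x+c*y^2 - a*x - b), mul_nonneg hy2.le (sq_nonneg (2*c*x+d-a)), mul_nonneg hy2.le (sq_nonneg (d+a))]
  have e3 : (c*x^2+d*x+c*y^2 - a*x - b)^2 = 0 := by linarith [sq_nonneg (c*x^2+d*x - c*y^2 - a*x - b), sq_nonneg (c*x^2+d*x+c*y^2 - a*x - b), mul_nonneg hy2.le (sq_nonneg (2*c*x+d-a)), mul_nonneg hy2.le (sq_nonneg (d+a))]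
  have e4 : y^2*(d+a)^2 = 0 := by linarith [sq_nonneg (c*x^2+d*x - c*y^2 - a*x - b), sq_nonneg (c*x^2+d*x+c*y^2 - a*x - b), mul_nonneg hy2.le (sq_nonneg (2*c*x+d-a)), mul_nonneg hy2.le (sq_nonneg (d+a))]
  have f1 : c*x^2+d*x - c*y^2 - a*x - b = 0 := pow_eq_zero_iff (n := 2) (by norm_num) |>.mp e1
  have f3 : c*x^2+d*x+c*y^2 - a*x - b = 0 := pow_eq_zero_iff (n := 2) (by norm_num) |>.mp e3
  have f2 : 2*c*x+d-a = 0 := pow_eq_zero_iff (n := 2) (by norm_num) |>.mp ((mul_eq_zero.mp e2).resolve_left hy2.ne')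
  have f4 : d + a = 0 := pow_eq_zero_iff (n := 2) (by norm_num) |>.mp ((mul_eq_zero.mp e4).resolve_left hy2.ne')
  have hc : c = 0 := by
    have : c * y^2 = 0 := by linarith
    exact (mul_eq_zero.mp this).resolve_right hy2.ne'
  subst hc
  have ha : a = 0 := by linarith
  have hd : d = 0 := by linarith
  have hb : b = 0 := by rw [ha, hd] at f1; linarith
  exact hne ⟨ha, hb, by rfl, hd⟩

/-- Let `F` be a totally real number field of degree `n` and `B = (h,k|F)`
a quaternion algebra split at exactly one real place `v` (embedding `ι : B → M₂(ℝ)`,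
with `det (ι g) = v(nrd g)`) and ramified at the remaining `n-1` real places `w i`
(where the reduced norm is positive definite).  For `p = x + yi ∈ ℍ`, the absolute
reduced norm `N(g) = |f_{ι(g)}(p)|² + 2y²·Tr_{F/ℚ}(nrd g)` is a positive definite
quadratic form on `B` viewed as a `ℚ`-vector space of dimension `4n`. -/
theorem absRedNorm_positive_definite (F : Type) [Field F] [Algebra ℚ F]
    [FiniteDimensional ℚ F] (h k : F) (hh : h ≠ 0) (hk : k ≠ 0)
    (x y : ℝ) (hy : 0 < y)
    (v : F →+* ℝ) (w : Fin (Module.finrank ℚ F - 1) → (F →+* ℝ))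
    (htr : ∀ a : F, ((Algebra.trace ℚ F a : ℚ) : ℝ) = v a + ∑ i, w i a)
    (ι : QuaternionAlgebra F h 0 k →+* Matrix (Fin 2) (Fin 2) ℝ)
    (hι : Function.Injective ι)
    (hdet : ∀ g : QuaternionAlgebra F h 0 k, (ι g).det = v (quatNrd h k g))
    (hram : ∀ (i : Fin (Module.finrank ℚ F - 1)) (g : QuaternionAlgebra F h 0 k),
      g ≠ 0 → 0 < w i (quatNrd h k g)) :
    (∀ g : QuaternionAlgebra F h 0 k, 0 ≤ absRedNorm h k ι x y g) ∧
    (∀ g : QuaternionAlgebra F h 0 k, absRedNorm h k ι x y g = 0 ↔ g = 0) ∧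
    (∀ (q : ℚ) (g : QuaternionAlgebra F h 0 k),
      absRedNorm h k ι x y (q • g) = (q : ℝ) ^ 2 * absRedNorm h k ι x y g) ∧
    Module.finrank ℚ (QuaternionAlgebra F h 0 k) = 4 * Module.finrank ℚ F := by
  -- N(g) = rhsForm(entries of ι g) + 2y²·Σ ramified terms
  have hN : ∀ g : QuaternionAlgebra F h 0 k, absRedNorm h k ι x y g =
      rhsForm (ι g 0 0) (ι g 0 1) (ι g 1 0) (ι g 1 1) x y
        + 2 * y^2 * ∑ i, w i (quatNrd h k g) := by
    intro g
    have hkey := key_eq (ι g 0 0) (ι g 0 1) (ι g 1 0) (ι g 1 1) x y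
    have hd : (ι g 0 0) * (ι g 1 1) - (ι g 0 1) * (ι g 1 0) = v (quatNrd h k g) := by
      rw [← hdet g, Matrix.det_fin_two]
    rw [absRedNorm, htr, ← hd]
    linear_combination hkey
  have hzero : absRedNorm h k ι x y 0 = 0 := by
    have h0 : quatNrd h k (0 : QuaternionAlgebra F h 0 k) = 0 := by
      simp [quatNrd]
    rw [absRedNorm, h0, map_zero ι, map_zero]
    simp
  have hpos : ∀ g : QuaternionAlgebra F h 0 k, g ≠ 0 → 0 < absRedNorm h k ι x y g := by
    intro g hg
    rw [hN g]
    have h1 : 0 < rhsForm (ι g 0 0) (ι g 0 1) (ι g 1 0) (ι g 1 1) x y := by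
      apply key_pos _ _ _ _ _ _ hy.ne'
      rintro ⟨ha, hb, hc, hd⟩
      apply hg
      apply hι
      rw [map_zero ι]
      ext i j
      fin_cases i <;> fin_cases j <;> simpa [Matrix.zero_apply]
    have h2 : (0:ℝ) ≤ ∑ i, w i (quatNrd h k g) :=
      Finset.sum_nonneg fun i _ => (hram i g hg).le
    nlinarith [sq_nonneg y]
  refine ⟨?_, ?_, ?_, ?_⟩
  · intro g
    rcases eq_or_ne g 0 with rfl | hg
    · rw [hzero]
    · exact (hpos g hg).le
  · intro g
    constructor
    · intro hg0
      by_contra hg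
      exact absurd hg0 (hpos g hg).ne'
    · rintro rfl; exact hzero
  · intro q g
    -- entries of ι (q • g)
    have hsm : ι (q • g) = (q : ℝ) • ι g := by
      rw [Algebra.smul_def, map_mul]
      have h2 : ι (algebraMap ℚ (QuaternionAlgebra F h 0 k) q)
          = algebraMap ℚ (Matrix (Fin 2) (Fin 2) ℝ) q := by
        exact RingHom.congr_fun
          (Subsingleton.elim (ι.comp (algebraMap ℚ (QuaternionAlgebra F h 0 k)))
            (algebraMap ℚ (Matrix (Fin 2) (Fin 2) ℝ))) q
      rw [h2, ← Algebra.smul_def]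
      ext i j
      simp [Matrix.smul_apply, Rat.smul_def]
    have hent : ∀ i j, (ι (q • g)) i j = (q : ℝ) * (ι g) i j := by
      intro i j
      rw [hsm, Matrix.smul_apply, smul_eq_mul]
    have hnrd : quatNrd h k (q • g) = (q^2 : ℚ) • quatNrd h k g := by
      simp only [quatNrd, QuaternionAlgebra.re_smul, QuaternionAlgebra.imI_smul,
        QuaternionAlgebra.imJ_smul, QuaternionAlgebra.imK_smul]
      simp only [Algebra.smul_def, map_pow]
      ring
    have htr2 : ((Algebra.trace ℚ F (quatNrd h k (q • g)) : ℚ) : ℝ)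
        = (q:ℝ)^2 * ((Algebra.trace ℚ F (quatNrd h k g) : ℚ) : ℝ) := by
      rw [hnrd, map_smul, smul_eq_mul]
      push_cast
      ring
    rw [absRedNorm, absRedNorm, hent, hent, hent, hent, htr2]
    have hfac : (((q : ℝ) * (ι g) 1 0 : ℝ) : ℂ) * ((x : ℂ) + y * Complex.I) ^ 2 +
        ((((q : ℝ) * (ι g) 1 1 : ℝ) : ℂ) - (((q : ℝ) * (ι g) 0 0 : ℝ) : ℂ)) *
          ((x : ℂ) + y * Complex.I) - (((q : ℝ) * (ι g) 0 1 : ℝ) : ℂ)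
        = ((q:ℝ) : ℂ) * (((ι g) 1 0 : ℂ) * ((x : ℂ) + y * Complex.I) ^ 2 +
          (((ι g) 1 1 : ℂ) - ((ι g) 0 0 : ℂ)) * ((x : ℂ) + y * Complex.I) - ((ι g) 0 1 : ℂ)) := by
      push_cast
      ring
    rw [hfac, norm_mul, mul_pow, Complex.norm_real, Real.norm_eq_abs, _root_.sq_abs]
    ring
  · have t1 : Module.finrank F (QuaternionAlgebra F h 0 k) = 4 :=
      QuaternionAlgebra.finrank_eq_four h 0 k
    have t2 := Module.finrank_mul_finrank ℚ F (QuaternionAlgebra F h 0 k)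
    rw [t1] at t2
    omega
end
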